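/- Let c > 0, β > 0, m > 0, and let v solve m v'(t) = -(β²/(2c)) · v(t)/(c² - v(t)²) on [0,∞) with 0 < v(0) < c. Then for all t ≥ 0, v(t) ≥ v(0) · exp(-(β²/(2 m c (c² - v(0)²))) t); in particular v(t) > 0 for all t. -/

import Mathlib

/-- lower bound `v t ≥ v 0 · exp(-(β²/(2mc(c²-v(0)²))) t)`; in
particular `v t > 0` for all `t ≥ 0`. -/
theorem stmt_3 (c β m : ℝ) (hc : 0 < c) (hβ : 0 < β) (hm : 0 < m)
    (v : ℝ → ℝ)
    (hv : ∀ t ∈ Set.Ici (0:ℝ),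
      HasDerivAt v (-(β^2/(2*c)) * (v t / (c^2 - (v t)^2)) / m) t)
    (h0 : 0 < v 0) (h0' : v 0 < c) :
    ∀ t ∈ Set.Ici (0:ℝ),
      v 0 * Real.exp (-(β^2/(2*m*c*(c^2 - (v 0)^2))) * t) ≤ v t ∧ 0 < v t := by
  set K := β^2/(2*m*c*(c^2 - (v 0)^2)) with hKdef
  have hsub : 0 < c^2 - (v 0)^2 := by nlinarith
  have hKpos : 0 < K := by rw [hKdef]; positivity
  have hderiv_nonpos : ∀ x : ℝ, 0 < x → x < c →
      -(β^2/(2*c)) * (x / (c^2 - x^2)) / m ≤ 0 := by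
    intro x hx hxc
    have h1 : 0 < c^2 - x^2 := by nlinarith
    have h2 : 0 < β^2/(2*c) * (x / (c^2 - x^2)) / m := by positivity
    have h3 : -(β^2/(2*c)) * (x / (c^2 - x^2)) / m
        = -(β^2/(2*c) * (x / (c^2 - x^2)) / m) := by ring
    rw [h3]; linarith
  have hderiv_ge : ∀ x : ℝ, 0 < x → x ≤ v 0 →
      -K * x ≤ -(β^2/(2*c)) * (x / (c^2 - x^2)) / m := by
    intro x hx hxv
    have h1 : 0 < c^2 - x^2 := by nlinarith
    have hm' : m ≠ 0 := ne_of_gt hm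
    have hc' : (c:ℝ) ≠ 0 := ne_of_gt hc
    have hs' : c^2 - (v 0)^2 ≠ 0 := ne_of_gt hsub
    have h2 : c^2 - (v 0)^2 ≤ c^2 - x^2 := by nlinarith
    have h3 : x / (c^2 - x^2) ≤ x / (c^2 - (v 0)^2) := by
      gcongr
    have h4 := mul_le_mul_of_nonneg_left h3 (by positivity : (0:ℝ) ≤ β^2/(2*c)/m)
    have heq : K * x = β^2/(2*c)/m * (x / (c^2 - (v 0)^2)) := by
      rw [hKdef]; field_simp
    have heq2 : -(β^2/(2*c)) * (x / (c^2 - x^2)) / m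
        = -(β^2/(2*c)/m * (x / (c^2 - x^2))) := by ring
    rw [heq2]
    nlinarith [h4, heq]
  have key : ∀ T, 0 ≤ T → (∀ s, 0 ≤ s → s < T → 0 < v s ∧ v s < c) →
      v 0 * Real.exp (-K * T) ≤ v T ∧ v T ≤ v 0 := by
    intro T hT hpos
    have cont : ContinuousOn v (Set.Icc 0 T) := fun s hs =>
      ((hv s hs.1).continuousAt).continuousWithinAt
    have anti : AntitoneOn v (Set.Icc 0 T) := by
      apply antitoneOn_of_deriv_nonpos (convex_Icc 0 T) cont
      · intro x hx
        rw [interior_Icc] at hx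
        exact ((hv x hx.1.le).differentiableAt).differentiableWithinAt
      · intro x hx
        rw [interior_Icc] at hx
        obtain ⟨hx1, hx2⟩ := hpos x hx.1.le hx.2
        rw [(hv x hx.1.le).deriv]
        exact hderiv_nonpos _ hx1 hx2
    have hle : ∀ s ∈ Set.Icc (0:ℝ) T, v s ≤ v 0 := fun s hs =>
      anti (Set.left_mem_Icc.mpr hT) hs hs.1
    set g : ℝ → ℝ := fun t => v t * Real.exp (K * t) with hg
    have hgd : ∀ x : ℝ, 0 ≤ x → HasDerivAt g
        ((-(β^2/(2*c)) * (v x / (c^2 - (v x)^2)) / m) * Real.exp (K*x)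
          + v x * (K * Real.exp (K*x))) x := by
      intro x hx
      have h1 : HasDerivAt (fun t => Real.exp (K*t)) (Real.exp (K*x) * K) x := by
        exact ((Real.hasDerivAt_exp (K*x)).comp x ((hasDerivAt_id x).const_mul K)).congr_deriv (by simp)
      have h2 := (hv x hx).mul h1
      exact h2.congr_deriv (by ring)
    have monog : MonotoneOn g (Set.Icc 0 T) := by
      apply monotoneOn_of_deriv_nonneg (convex_Icc 0 T)
      · exact ContinuousOn.mul cont
          ((Real.continuous_exp.comp (continuous_const.mul continuous_id)).continuousOn)
      · intro x hx; rw [interior_Icc] at hx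
        exact (hgd x hx.1.le).differentiableAt.differentiableWithinAt
      · intro x hx; rw [interior_Icc] at hx
        obtain ⟨hx1, hx2⟩ := hpos x hx.1.le hx.2
        have hxle := hle x ⟨hx.1.le, hx.2.le⟩
        rw [(hgd x hx.1.le).deriv]
        have h3 := hderiv_ge (v x) hx1 hxle
        have hexp : 0 < Real.exp (K*x) := Real.exp_pos _
        have h4 : 0 ≤ (-(β^2/(2*c)) * (v x / (c^2 - (v x)^2)) / m + K * v x) := by linarith
        nlinarith [mul_nonneg h4 hexp.le]
    have h01 : g 0 ≤ g T := monog (Set.left_mem_Icc.mpr hT) (Set.right_mem_Icc.mpr hT) hT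
    have hg0 : g 0 = v 0 := by simp [hg]
    have hgT : g T = v T * Real.exp (K*T) := rfl
    have hexpT : Real.exp (-K*T) * Real.exp (K*T) = 1 := by
      rw [← Real.exp_add]; ring_nf; exact Real.exp_zero
    have hexpP : 0 < Real.exp (-K*T) := Real.exp_pos _
    constructor
    · rw [hg0, hgT] at h01
      have h5 := mul_le_mul_of_nonneg_left h01 hexpP.le
      have h6 : Real.exp (-K*T) * (v T * Real.exp (K*T)) = v T := by
        rw [show Real.exp (-K*T) * (v T * Real.exp (K*T))
            = v T * (Real.exp (-K*T) * Real.exp (K*T)) from by ring, hexpT, mul_one]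
      nlinarith [h5, h6]
    · exact hle T ⟨hT, le_rfl⟩
  have pos : ∀ t, 0 ≤ t → 0 < v t ∧ v t < c := by
    by_contra hcon
    push_neg at hcon
    obtain ⟨t0, ht0, hbad⟩ := hcon
    have hne : Set.Nonempty {t : ℝ | 0 ≤ t ∧ (v t ≤ 0 ∨ c ≤ v t)} := by
      refine ⟨t0, ht0, ?_⟩
      by_cases h : 0 < v t0
      · exact Or.inr (hbad h)
      · exact Or.inl (not_lt.mp h)
    set B : Set ℝ := {t : ℝ | 0 ≤ t ∧ (v t ≤ 0 ∨ c ≤ v t)} with hB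
    have hbdd : BddBelow B := ⟨0, fun b hb => hb.1⟩
    set T := sInf B with hTdef
    have hT0 : 0 ≤ T := le_csInf hne fun b hb => hb.1
    have hIco : ∀ s, 0 ≤ s → s < T → 0 < v s ∧ v s < c := by
      intro s hs hsT
      by_contra h
      push_neg at h
      have hsB : s ∈ B := by
        refine ⟨hs, ?_⟩
        by_cases h' : 0 < v s
        · exact Or.inr (h h')
        · exact Or.inl (not_lt.mp h')
      exact absurd (csInf_le hbdd hsB) (not_le.mpr hsT)
    obtain ⟨hlow, hup⟩ := key T hT0 hIco
    have hvT1 : 0 < v T := by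
      have : 0 < v 0 * Real.exp (-K * T) := by positivity
      linarith
    have hvT2 : v T < c := by linarith
    have hcontT : ContinuousAt v T := (hv T hT0).continuousAt
    have hnhds : ∀ᶠ s in nhds T, v s ∈ Set.Ioo 0 c :=
      hcontT.eventually_mem (isOpen_Ioo.mem_nhds ⟨hvT1, hvT2⟩)
    obtain ⟨ε, hε, hball⟩ := Metric.eventually_nhds_iff.mp hnhds
    have hBge : ∀ b ∈ B, T + ε ≤ b := by
      intro b hb
      by_contra hlt
      push_neg at hlt
      have hbT : T ≤ b := csInf_le hbdd hb
      have hdist : dist b T < ε := by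
        rw [Real.dist_eq, abs_of_nonneg (by linarith)]
        linarith
      have := hball hdist
      rcases hb.2 with h | h
      · exact absurd this.1 (not_lt.mpr h)
      · exact absurd this.2 (not_lt.mpr h)
    have hfin : T + ε ≤ T := le_csInf hne hBge
    linarith
  intro t ht
  have hkey := key t ht (fun s hs _ => pos s hs)
  exact ⟨hkey.1, (pos t ht).1⟩
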